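/- Every prenex existential IF sentence (a sentence whose prefix contains only existential quantifiers) is strongly equivalent to the first-order sentence obtained by emptying all slash sets: removing or adding any superordinate variables in the slash sets yields a strongly equivalent sentence. -/

import Mathlib

/-! Core model of prenex IF sentences and their imperfect-information
game semantics.

A quantifier prefix is a list of triples `(isUniversal, variable, slash set)`.
A (prenex) IF sentence is such a prefix together with a quantifier-free
matrix `QF` interpreted in a structure `(M, I)`.  A strategy assigns to each
quantifier position a choice function on assignments; admissibility says the
choice function only depends on the variables visible at that position
(the superordinated variables minus the slash set).  Truth = existence of a
winning strategy for Éloïse, falsity = for Abélard. -/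

abbrev Var := ℕ
abbrev Quant := Bool × Var × Finset Var   -- (isUniversal?, variable, slash set)
abbrev QPrefix := List Quant

def qUniv (Q : QPrefix) (i : ℕ) : Prop := (Q.getD i default).1 = true
def qvar (Q : QPrefix) (i : ℕ) : Var := (Q.getD i default).2.1
def qslash (Q : QPrefix) (i : ℕ) : Finset Var := (Q.getD i default).2.2

/-- variables quantified superordinated to position `i`. -/
def varsBefore (Q : QPrefix) (i : ℕ) : Finset Var :=
  ((Q.take i).map (fun q => q.2.1)).toFinset

/-- the variables visible at position `i`. -/
def visible (Q : QPrefix) (i : ℕ) : Finset Var := varsBefore Q i \ qslash Q i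

def agreeOn {M : Type*} (s t : Var → M) (A : Finset Var) : Prop :=
  ∀ v ∈ A, s v = t v

/-- A (pure) strategy: a choice function for every quantifier position. -/
abbrev Strat (M : Type*) := ℕ → (Var → M) → M

/-- Admissibility of an Éloïse strategy: at each existential position its
choice function depends only on the visible variables. -/
def EAdmissible {M : Type*} (Q : QPrefix) (σ : Strat M) : Prop :=
  ∀ i, i < Q.length → ¬ qUniv Q i →
    ∀ s t : Var → M, agreeOn s t (visible Q i) → σ i s = σ i t

/-- Admissibility of an Abélard strategy (dually, at universal positions). -/
def AAdmissible {M : Type*} (Q : QPrefix) (τ : Strat M) : Prop :=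
  ∀ i, i < Q.length → qUniv Q i →
    ∀ s t : Var → M, agreeOn s t (visible Q i) → τ i s = τ i t

/-- The terminal assignment of the play where Éloïse follows `σ` and
Abélard follows `τ`. -/
def outcome {M : Type*} (σ τ : Strat M) : QPrefix → ℕ → (Var → M) → (Var → M)
  | [], _, s => s
  | q :: rest, i, s =>
      outcome σ τ rest (i + 1)
        (Function.update s q.2.1 (if q.1 then τ i s else σ i s))

/-- Quantifier-free matrices (atomic and negated atomic formulas, ∧, ∨). -/
inductive QF where
  | rel  : ℕ → List Var → QF
  | nrel : ℕ → List Var → QF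
  | eq   : Var → Var → QF
  | neq  : Var → Var → QF
  | and  : QF → QF → QF
  | or   : QF → QF → QF

def QF.eval {M : Type*} (I : ℕ → List M → Prop) (s : Var → M) : QF → Prop
  | rel r ts => I r (ts.map s)
  | nrel r ts => ¬ I r (ts.map s)
  | eq a b => s a = s b
  | neq a b => s a ≠ s b
  | and φ ψ => φ.eval I s ∧ ψ.eval I s
  | or φ ψ => φ.eval I s ∨ ψ.eval I s

/-- Truth of the prenex IF sentence `Q⃗ψ` in the structure `(M, I)`:
Éloïse has a winning strategy in the semantic game. -/
def TrueIn (M : Type*) (I : ℕ → List M → Prop) (Q : QPrefix) (ψ : QF) : Prop :=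
  ∃ σ : Strat M, EAdmissible Q σ ∧
    ∀ τ : Strat M, ∀ s₀ : Var → M, ψ.eval I (outcome σ τ Q 0 s₀)

/-- Falsity: Abélard has a winning strategy. -/
def FalseIn (M : Type*) (I : ℕ → List M → Prop) (Q : QPrefix) (ψ : QF) : Prop :=
  ∃ τ : Strat M, AAdmissible Q τ ∧
    ∀ σ : Strat M, ∀ s₀ : Var → M, ¬ ψ.eval I (outcome σ τ Q 0 s₀)

/-- `φ^{y←x}`: remove `x` from the slash set of the quantifier at position `j`. -/
def removeSlash (Q : QPrefix) (j : ℕ) (x : Var) : QPrefix :=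
  Q.set j ((Q.getD j default).1, (Q.getD j default).2.1,
    (Q.getD j default).2.2.erase x)

/-- An I∃∃ declaration of independence: position `iy` (existential) declares
independence from the existential position `ix` superordinated to it. -/
def IEE (Q : QPrefix) (ix iy : ℕ) : Prop :=
  ix < iy ∧ iy < Q.length ∧ ¬ qUniv Q ix ∧ ¬ qUniv Q iy ∧
    qvar Q ix ∈ qslash Q iy

/-- Sameness of (three-valued) truth values on `(M,I)`. -/
def SameTV (M : Type*) (I : ℕ → List M → Prop) (Q Q' : QPrefix) (ψ : QF) : Prop :=
  (TrueIn M I Q ψ ↔ TrueIn M I Q' ψ) ∧ (FalseIn M I Q ψ ↔ FalseIn M I Q' ψ)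

/-- Relevance of the I∃∃ at `(ix, iy)` in `Q⃗`: some sentence beginning with
`Q⃗` changes its truth value on some structure when the declaration of
independence is removed. -/
def Relevant (Q : QPrefix) (ix iy : ℕ) : Prop :=
  ∃ (R : QPrefix) (ψ : QF) (M : Type) (I : ℕ → List M → Prop),
    ¬ SameTV M I (Q ++ R) (removeSlash Q iy (qvar Q ix) ++ R) ψ

/-- A broken signalling sequence
`((∀v_k/V_k),(∃v_{k-1}/V_{k-1}),…,(∃v_1/V_1),(∃x/X),(∃y/Y))` in `Q⃗`,
ending with positions `ix` (of `x`) and `iy` (of `y`); `l = [i_1, …, i_k]`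
lists the positions of `v_1, …, v_k`. -/
def BrokenSignalling (Q : QPrefix) (ix iy : ℕ) : Prop :=
  ∃ l : List ℕ, l ≠ [] ∧
    l.head! < ix ∧ qvar Q l.head! ∉ qslash Q ix ∧
    List.Chain' (fun a b => b < a ∧ qvar Q b ∉ qslash Q a) l ∧
    (∀ i ∈ l.dropLast, ¬ qUniv Q i) ∧
    qUniv Q l.getLast! ∧
    (∀ i ∈ l, qvar Q i ∈ qslash Q iy)


section Aux

variable {M : Type*}

/-- Play where Éloïse follows `σ` and the remaining variables to quantify
(all existential) are `vs`, starting at position `i`. -/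
def eplay (σ : Strat M) : List Var → ℕ → (Var → M) → (Var → M)
  | [], _, s => s
  | v :: vs, i, s => eplay σ vs (i + 1) (Function.update s v (σ i s))

/-- Play driven by a fixed choice sequence `c`. -/
def cplay (c : ℕ → M) : List Var → ℕ → (Var → M) → (Var → M)
  | [], _, s => s
  | v :: vs, i, s => cplay c vs (i + 1) (Function.update s v (c i))

lemma qUniv_lt {Q : QPrefix} {i : ℕ} (h : i < Q.length) :
    qUniv Q i ↔ Q[i].1 = true := by
  unfold qUniv; rw [List.getD_eq_getElem Q default h]

lemma qvar_lt {Q : QPrefix} {i : ℕ} (h : i < Q.length) :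
    qvar Q i = Q[i].2.1 := by
  unfold qvar; rw [List.getD_eq_getElem Q default h]

lemma outcome_eplay (σ τ : Strat M) :
    ∀ (Q : QPrefix) (i : ℕ) (s : Var → M), (∀ q ∈ Q, q.1 = false) →
      outcome σ τ Q i s = eplay σ (Q.map (fun q => q.2.1)) i s
  | [], _, _, _ => rfl
  | q :: rest, i, s, h => by
    have hq : q.1 = false := h q List.mem_cons_self
    simp only [outcome, eplay, List.map_cons, hq, Bool.false_eq_true, if_false]
    exact outcome_eplay σ τ rest (i + 1) _ (fun p hp => h p (List.mem_cons_of_mem _ hp))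

lemma eplay_const (c : ℕ → M) :
    ∀ (vs : List Var) (i : ℕ) (s : Var → M),
      eplay (fun j _ => c j) vs i s = cplay c vs i s
  | [], _, _ => rfl
  | v :: vs, i, s => by
    simp only [eplay, cplay]
    exact eplay_const c vs (i + 1) _

lemma allFalse_of_hex {Q : QPrefix} (hex : ∀ i, i < Q.length → ¬ qUniv Q i) :
    ∀ q ∈ Q, q.1 = false := by
  intro q hq
  obtain ⟨n, hn, rfl⟩ := List.getElem_of_mem hq
  have := hex n hn
  rw [qUniv_lt hn] at this
  simpa using this

lemma mem_varsBefore_succ {Q : QPrefix} {i : ℕ} (hi : i < Q.length) {w : Var}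
    (hw : w ∈ varsBefore Q (i + 1)) : w ∈ varsBefore Q i ∨ w = qvar Q i := by
  unfold varsBefore at *
  rw [List.take_succ] at hw
  simp only [List.map_append, List.toFinset_append, Finset.mem_union] at hw
  rcases hw with h | h
  · exact Or.inl h
  · right
    rw [List.getElem?_eq_getElem hi] at h
    simp only [Option.toList_some, List.map_cons, List.map_nil, List.toFinset_cons,
      List.toFinset_nil, LawfulSingleton.insert_empty_eq, Finset.mem_singleton] at h
    rw [qvar_lt hi]; simpa using h

/-- the canonical play state at position `i`, starting from `m0`. -/
def sstar (σ : Strat M) (V : List Var) (m0 : Var → M) : ℕ → (Var → M)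
  | 0 => m0
  | i + 1 => Function.update (sstar σ V m0 i) (V.getD i 0) (σ i (sstar σ V m0 i))

lemma eplay_eq_cplay {Q : QPrefix} (σ : Strat M)
    (hex : ∀ i, i < Q.length → ¬ qUniv Q i) (hadm : EAdmissible Q σ)
    (m0 : Var → M) :
    ∀ (vs : List Var) (i : ℕ) (s : Var → M),
      vs = (Q.map (fun q => q.2.1)).drop i →
      agreeOn s (sstar σ (Q.map (fun q => q.2.1)) m0 i) (varsBefore Q i) →
      eplay σ vs i s =
        cplay (fun j => σ j (sstar σ (Q.map (fun q => q.2.1)) m0 j)) vs i s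
  | [], _, _, _, _ => rfl
  | v :: vs, i, s, hvs, hagree => by
    set V := Q.map (fun q => q.2.1) with hV
    have hi : i < Q.length := by
      by_contra hle
      push_neg at hle
      have : V.drop i = [] := List.drop_eq_nil_of_le (by simpa [hV] using hle)
      rw [this] at hvs; exact absurd hvs (by simp)
    have hiV : i < V.length := by simpa [hV]
    have hdrop : V.drop i = V[i] :: V.drop (i + 1) := List.drop_eq_getElem_cons hiV
    rw [hdrop] at hvs
    obtain ⟨hv, hvs'⟩ : v = V[i] ∧ vs = V.drop (i + 1) := by
      constructor
      · exact (List.cons.injEq .. ▸ hvs).1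
      · exact (List.cons.injEq .. ▸ hvs).2
    have hvq : v = qvar Q i := by
      rw [qvar_lt hi, hv]
      simp [hV]
    have hgetD : V.getD i 0 = v := by
      rw [List.getD_eq_getElem V 0 hiV, hv]
    have hsig : σ i s = σ i (sstar σ V m0 i) := by
      refine hadm i hi (hex i hi) _ _ ?_
      intro w hw
      exact hagree w (Finset.sdiff_subset hw)
    simp only [eplay, cplay, hsig]
    refine eplay_eq_cplay σ hex hadm m0 vs (i + 1) _ hvs' ?_
    intro w hw
    show Function.update s v (σ i (sstar σ V m0 i)) w =
      sstar σ V m0 (i + 1) w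
    simp only [sstar]
    rw [hgetD]
    rcases eq_or_ne w v with rfl | hne
    · rw [Function.update_self, Function.update_self]
    · rw [Function.update_of_ne hne, Function.update_of_ne hne]
      rcases mem_varsBefore_succ hi hw with h | h
      · exact hagree w h
      · exact absurd (hvq ▸ h) hne

lemma varsBefore_zero (Q : QPrefix) : varsBefore Q 0 = ∅ := by
  simp [varsBefore]

lemma trueIn_of_empty {M : Type*} (h : ¬ Nonempty M) (I : ℕ → List M → Prop)
    (Q : QPrefix) (ψ : QF) : TrueIn M I Q ψ := by
  refine ⟨fun _ s => s 0, ?_, ?_⟩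
  · intro i _ _ s _ _
    exact (h ⟨s 0⟩).elim
  · intro τ s₀
    exact (h ⟨s₀ 0⟩).elim

lemma trueIn_iff {M : Type*} (hne : Nonempty M) (I : ℕ → List M → Prop)
    (Q : QPrefix) (ψ : QF) (hex : ∀ i, i < Q.length → ¬ qUniv Q i) :
    TrueIn M I Q ψ ↔
      ∃ c : ℕ → M, ∀ s₀ : Var → M,
        ψ.eval I (cplay c (Q.map (fun q => q.2.1)) 0 s₀) := by
  constructor
  · rintro ⟨σ, hadm, hw⟩
    obtain ⟨m⟩ := hne
    set V := Q.map (fun q => q.2.1) with hV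
    refine ⟨fun j => σ j (sstar σ V (fun _ => m) j), fun s₀ => ?_⟩
    have h1 := hw (fun _ s => s 0) s₀
    rw [outcome_eplay σ _ Q 0 s₀ (allFalse_of_hex hex)] at h1
    rwa [eplay_eq_cplay σ hex hadm (fun _ => m) V 0 s₀ rfl
      (by rw [varsBefore_zero]; exact fun w hw => absurd hw (Finset.notMem_empty w))] at h1
  · rintro ⟨c, hc⟩
    refine ⟨fun j _ => c j, fun i _ _ s t _ => rfl, fun τ s₀ => ?_⟩
    rw [outcome_eplay _ τ Q 0 s₀ (allFalse_of_hex hex), eplay_const]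
    exact hc s₀

lemma falseIn_iff {M : Type*} (I : ℕ → List M → Prop)
    (Q : QPrefix) (ψ : QF) (hex : ∀ i, i < Q.length → ¬ qUniv Q i) :
    FalseIn M I Q ψ ↔
      ∀ (σ : Strat M) (s₀ : Var → M),
        ¬ ψ.eval I (eplay σ (Q.map (fun q => q.2.1)) 0 s₀) := by
  constructor
  · rintro ⟨τ, _, hw⟩ σ s₀
    have := hw σ s₀
    rwa [outcome_eplay σ τ Q 0 s₀ (allFalse_of_hex hex)] at this
  · intro h
    refine ⟨fun _ s => s 0, ?_, ?_⟩
    · intro i hi hu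
      exact absurd hu (hex i hi)
    · intro σ s₀
      rw [outcome_eplay σ _ Q 0 s₀ (allFalse_of_hex hex)]
      exact h σ s₀

lemma sameTV_of {M : Type*} (I : ℕ → List M → Prop) (Q Q' : QPrefix) (ψ : QF)
    (hexQ : ∀ i, i < Q.length → ¬ qUniv Q i)
    (hexQ' : ∀ i, i < Q'.length → ¬ qUniv Q' i)
    (hvars : Q.map (fun q => q.2.1) = Q'.map (fun q => q.2.1)) :
    SameTV M I Q Q' ψ := by
  constructor
  · by_cases hne : Nonempty M
    · rw [trueIn_iff hne I Q ψ hexQ, trueIn_iff hne I Q' ψ hexQ', hvars]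
    · exact ⟨fun _ => trueIn_of_empty hne I Q' ψ, fun _ => trueIn_of_empty hne I Q ψ⟩
  · rw [falseIn_iff I Q ψ hexQ, falseIn_iff I Q' ψ hexQ', hvars]

end Aux

/-- in a prenex existential IF sentence, removing or adding
any superordinated variables in the slash sets yields a strongly equivalent
sentence; in particular (for regular prefixes) emptying all slash sets
yields a strongly equivalent first-order sentence. -/
theorem stmt11 (Q Q' : QPrefix)
    (hexQ : ∀ i, i < Q.length → ¬ qUniv Q i)
    (hlen : Q'.length = Q.length)
    (hexQ' : ∀ i, i < Q.length → ¬ qUniv Q' i)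
    (hvar : ∀ i, i < Q.length → qvar Q' i = qvar Q i)
    (hmod : ∀ i, i < Q.length →
      qslash Q' i \ varsBefore Q i = qslash Q i \ varsBefore Q i)
    (ψ : QF) (M : Type*) (I : ℕ → List M → Prop) :
    SameTV M I Q Q' ψ ∧
    ((∀ i, i < Q.length → qslash Q i ⊆ varsBefore Q i) →
      SameTV M I Q (Q.map (fun q => (q.1, q.2.1, (∅ : Finset Var)))) ψ) := by
  have hvars : Q.map (fun q => q.2.1) = Q'.map (fun q => q.2.1) := by
    apply List.ext_getElem (by simp [hlen])
    intro i h1 h2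
    have hi : i < Q.length := by simpa using h1
    have hi' : i < Q'.length := by simpa using h2
    have := hvar i hi
    rw [qvar_lt hi, qvar_lt hi'] at this
    simp [this]
  have hexQ'2 : ∀ i, i < Q'.length → ¬ qUniv Q' i := by
    intro i hi; exact hexQ' i (hlen ▸ hi)
  refine ⟨sameTV_of I Q Q' ψ hexQ hexQ'2 hvars, fun _ => ?_⟩
  set Q'' := Q.map (fun q => (q.1, q.2.1, (∅ : Finset Var))) with hQ''
  have hlen'' : Q''.length = Q.length := by simp [hQ'']
  have hexQ'' : ∀ i, i < Q''.length → ¬ qUniv Q'' i := by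
    intro i hi
    have hiQ : i < Q.length := hlen'' ▸ hi
    have h0 := hexQ i hiQ
    rw [qUniv_lt hiQ] at h0
    rw [qUniv_lt hi]
    simpa [hQ''] using h0
  have hvars'' : Q.map (fun q => q.2.1) = Q''.map (fun q => q.2.1) := by
    simp [hQ'', List.map_map, Function.comp]
  exact sameTV_of I Q Q'' ψ hexQ hexQ'' hvars''
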